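/- Let F be an algebraically closed field and α₁, α₂, β₁, β₂ ∈ F. In the split octonion algebra O over F, there exists an F-algebra automorphism g of O with g(α₁·1 + β₁·u₁) = α₂·1 + β₂·u₁ if and only if α₁ = α₂ and either β₁ = β₂ = 0 or both β₁ and β₂ are nonzero. -/

import Mathlib

noncomputable section

/-- The split octonion algebra over `F`, given by Zorn vector matrices
`(x1, u; v, x2)` with `x1, x2 ∈ F` and `u, v ∈ F³`. -/
@[ext]
structure SplitOctonion (F : Type*) where
  x1 : F
  u : Fin 3 → F
  v : Fin 3 → F
  x2 : F

namespace SplitOctonion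

variable {F : Type*} [Field F]

/-- Dot product on `F³`. -/
def dot (x y : Fin 3 → F) : F := x 0 * y 0 + x 1 * y 1 + x 2 * y 2

/-- Cross product on `F³`. -/
def cross (x y : Fin 3 → F) : Fin 3 → F :=
  ![x 1 * y 2 - x 2 * y 1, x 2 * y 0 - x 0 * y 2, x 0 * y 1 - x 1 * y 0]

instance : Zero (SplitOctonion F) := ⟨⟨0, 0, 0, 0⟩⟩
instance : One (SplitOctonion F) := ⟨⟨1, 0, 0, 1⟩⟩
instance : Add (SplitOctonion F) :=
  ⟨fun x y => ⟨x.x1 + y.x1, x.u + y.u, x.v + y.v, x.x2 + y.x2⟩⟩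
instance : Neg (SplitOctonion F) := ⟨fun x => ⟨-x.x1, -x.u, -x.v, -x.x2⟩⟩
instance : SMul F (SplitOctonion F) :=
  ⟨fun c x => ⟨c * x.x1, c • x.u, c • x.v, c * x.x2⟩⟩

/-- Zorn vector matrix multiplication. -/
instance : Mul (SplitOctonion F) :=
  ⟨fun x y => ⟨x.x1 * y.x1 + dot x.u y.v,
    x.x1 • y.u + y.x2 • x.u - cross x.v y.v,
    y.x1 • x.v + x.x2 • y.v + cross x.u y.u,
    x.x2 * y.x2 + dot x.v y.u⟩⟩

@[simp] lemma zero_x1 : (0 : SplitOctonion F).x1 = 0 := rfl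
@[simp] lemma zero_u : (0 : SplitOctonion F).u = 0 := rfl
@[simp] lemma zero_v : (0 : SplitOctonion F).v = 0 := rfl
@[simp] lemma zero_x2 : (0 : SplitOctonion F).x2 = 0 := rfl
@[simp] lemma add_x1 (x y : SplitOctonion F) : (x + y).x1 = x.x1 + y.x1 := rfl
@[simp] lemma add_u (x y : SplitOctonion F) : (x + y).u = x.u + y.u := rfl
@[simp] lemma add_v (x y : SplitOctonion F) : (x + y).v = x.v + y.v := rfl
@[simp] lemma add_x2 (x y : SplitOctonion F) : (x + y).x2 = x.x2 + y.x2 := rfl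
@[simp] lemma neg_x1 (x : SplitOctonion F) : (-x).x1 = -x.x1 := rfl
@[simp] lemma neg_u (x : SplitOctonion F) : (-x).u = -x.u := rfl
@[simp] lemma neg_v (x : SplitOctonion F) : (-x).v = -x.v := rfl
@[simp] lemma neg_x2 (x : SplitOctonion F) : (-x).x2 = -x.x2 := rfl
@[simp] lemma smul_x1 (c : F) (x : SplitOctonion F) : (c • x).x1 = c * x.x1 := rfl
@[simp] lemma smul_u (c : F) (x : SplitOctonion F) : (c • x).u = c • x.u := rfl
@[simp] lemma smul_v (c : F) (x : SplitOctonion F) : (c • x).v = c • x.v := rfl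
@[simp] lemma smul_x2 (c : F) (x : SplitOctonion F) : (c • x).x2 = c * x.x2 := rfl

instance : AddCommGroup (SplitOctonion F) where
  add_assoc x y z := by ext <;> simp [add_assoc]
  zero_add x := by ext <;> simp
  add_zero x := by ext <;> simp
  add_comm x y := by ext <;> simp [add_comm]
  neg_add_cancel x := by ext <;> simp
  nsmul := nsmulRec
  zsmul := zsmulRec

instance : Module F (SplitOctonion F) where
  one_smul x := by ext <;> simp
  mul_smul c d x := by ext <;> simp [mul_assoc, mul_smul]
  smul_zero c := by ext <;> simp
  smul_add c x y := by ext <;> simp [mul_add, smul_add]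
  add_smul c d x := by ext <;> simp [add_mul, add_smul]
  zero_smul x := by ext <;> simp

/-- Powers of a single octonion (well defined by power-associativity). -/
def npow (x : SplitOctonion F) : ℕ → SplitOctonion F
  | 0 => 1
  | n + 1 => npow x n * x

instance : Pow (SplitOctonion F) ℕ := ⟨npow⟩

/-- Substitution of an octonion into a polynomial over `F`:
`f(x) = αₙ xⁿ + ⋯ + α₁ x + α₀ • 1`. -/
def peval (f : Polynomial F) (x : SplitOctonion F) : SplitOctonion F :=
  f.sum fun i c => c • x ^ i

/-- The octonion `e₁`. -/
def e1 : SplitOctonion F := ⟨1, 0, 0, 0⟩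
/-- The octonion `e₂`. -/
def e2 : SplitOctonion F := ⟨0, 0, 0, 1⟩
/-- The octonion `u₁`. -/
def u1 : SplitOctonion F := ⟨0, ![1, 0, 0], 0, 0⟩

/-- Conjugation on `O`. -/
def conj (x : SplitOctonion F) : SplitOctonion F := ⟨x.x2, -x.u, -x.v, x.x1⟩

/-- The norm of an octonion. -/
def normO (x : SplitOctonion F) : F := x.x1 * x.x2 - dot x.u x.v

/-- The trace of an octonion. -/
def trO (x : SplitOctonion F) : F := x.x1 + x.x2

/-- `g` is an `F`-algebra automorphism of `O`: a linear bijection preserving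
multiplication (and the unit). -/
def IsAlgAut (g : SplitOctonion F ≃ₗ[F] SplitOctonion F) : Prop :=
  g 1 = 1 ∧ ∀ x y, g (x * y) = g x * g y

end SplitOctonion

namespace SplitOctonion

variable {F : Type*} [Field F]

@[simp] lemma mul_x1' (x y : SplitOctonion F) :
    (x * y).x1 = x.x1 * y.x1 + dot x.u y.v := rfl
@[simp] lemma mul_u' (x y : SplitOctonion F) :
    (x * y).u = x.x1 • y.u + y.x2 • x.u - cross x.v y.v := rfl
@[simp] lemma mul_v' (x y : SplitOctonion F) :
    (x * y).v = y.x1 • x.v + x.x2 • y.v + cross x.u y.u := rfl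
@[simp] lemma mul_x2' (x y : SplitOctonion F) :
    (x * y).x2 = x.x2 * y.x2 + dot x.v y.u := rfl
@[simp] lemma one_x1 : (1 : SplitOctonion F).x1 = 1 := rfl
@[simp] lemma one_u : (1 : SplitOctonion F).u = 0 := rfl
@[simp] lemma one_v : (1 : SplitOctonion F).v = 0 := rfl
@[simp] lemma one_x2 : (1 : SplitOctonion F).x2 = 1 := rfl
@[simp] lemma u1_x1 : (u1 : SplitOctonion F).x1 = 0 := rfl
@[simp] lemma u1_u : (u1 : SplitOctonion F).u = ![1, 0, 0] := rfl
@[simp] lemma u1_v : (u1 : SplitOctonion F).v = 0 := rfl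
@[simp] lemma u1_x2 : (u1 : SplitOctonion F).x2 = 0 := rfl

/-- The diagonal scaling automorphism `diag(t, t⁻¹, 1)`. -/
def scaleAut (t : F) (ht : t ≠ 0) : SplitOctonion F ≃ₗ[F] SplitOctonion F where
  toFun x := ⟨x.x1, ![t * x.u 0, t⁻¹ * x.u 1, x.u 2],
    ![t⁻¹ * x.v 0, t * x.v 1, x.v 2], x.x2⟩
  invFun x := ⟨x.x1, ![t⁻¹ * x.u 0, t * x.u 1, x.u 2],
    ![t * x.v 0, t⁻¹ * x.v 1, x.v 2], x.x2⟩
  left_inv x := by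
    ext i <;> try rfl
    all_goals (fin_cases i <;> simp <;> field_simp)
  right_inv x := by
    ext i <;> try rfl
    all_goals (fin_cases i <;> simp <;> field_simp)
  map_add' x y := by
    ext i <;> try rfl
    all_goals (fin_cases i <;> simp <;> ring)
  map_smul' c x := by
    ext i <;> try rfl
    all_goals (fin_cases i <;> simp <;> ring)

lemma scaleAut_isAlgAut (t : F) (ht : t ≠ 0) : IsAlgAut (scaleAut t ht) := by
  constructor
  · ext i <;> try rfl
    all_goals (fin_cases i <;> simp [scaleAut])
  · intro x y
    ext i
    · show x.x1 * y.x1 + dot _ _ = x.x1 * y.x1 + dot _ _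
      simp only [scaleAut, LinearEquiv.coe_mk, dot]
      simp [Matrix.cons_val_zero, Matrix.cons_val_one]
      field_simp
    · show (_ : Fin 3 → F) i = _
      simp only [scaleAut, LinearEquiv.coe_mk, mul_u']
      fin_cases i <;>
        (simp [cross, Matrix.cons_val_zero, Matrix.cons_val_one, Pi.add_apply,
          Pi.sub_apply, Pi.smul_apply, smul_eq_mul]) <;> (first | ring1 | field_simp)
    · show (_ : Fin 3 → F) i = _
      simp only [scaleAut, LinearEquiv.coe_mk, mul_v']
      fin_cases i <;>
        (simp [cross, Matrix.cons_val_zero, Matrix.cons_val_one, Pi.add_apply,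
          Pi.sub_apply, Pi.smul_apply, smul_eq_mul]) <;> (first | ring1 | field_simp)
    · show x.x2 * y.x2 + dot _ _ = x.x2 * y.x2 + dot _ _
      simp only [scaleAut, LinearEquiv.coe_mk, dot]
      simp [Matrix.cons_val_zero, Matrix.cons_val_one]
      field_simp

end SplitOctonion

open SplitOctonion in
/-- `α₁·1 + β₁·u₁` and `α₂·1 + β₂·u₁` are in the same
automorphism orbit iff `α₁ = α₂` and `β₁, β₂` are both zero or both nonzero. -/
theorem aut_orbit_smul_one_add_smul_u1_iff {F : Type*} [Field F] [IsAlgClosed F]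
    (α₁ α₂ β₁ β₂ : F) :
    (∃ g : SplitOctonion F ≃ₗ[F] SplitOctonion F, IsAlgAut g ∧
        g (α₁ • (1 : SplitOctonion F) + β₁ • u1) = α₂ • (1 : SplitOctonion F) + β₂ • u1) ↔
      α₁ = α₂ ∧ ((β₁ = 0 ∧ β₂ = 0) ∨ (β₁ ≠ 0 ∧ β₂ ≠ 0)) := by
  constructor
  · rintro ⟨g, ⟨hg1, hgm⟩, hg⟩
    have h : α₁ • g 1 + g (β₁ • u1) = α₂ • (1 : SplitOctonion F) + β₂ • u1 := by
      rw [← map_smul, ← map_add]; exact hg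
    rw [hg1] at h
    have key : g (β₁ • u1) = (α₂ • (1 : SplitOctonion F) + β₂ • u1) - α₁ • 1 := by
      rw [← h]; abel
    have hu1sq : (β₁ • u1 : SplitOctonion F) * (β₁ • u1) = 0 := by
      ext i <;> try rfl
      all_goals
        simp [u1, dot, cross]
      all_goals
        (fin_cases i <;> simp)
    have hsq : ((α₂ • (1 : SplitOctonion F) + β₂ • u1) - α₁ • 1) *
        ((α₂ • (1 : SplitOctonion F) + β₂ • u1) - α₁ • 1) = 0 := by
      rw [← key, ← hgm, hu1sq, map_zero]
    have hα : α₁ = α₂ := by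
      have hx := congrArg SplitOctonion.x1 hsq
      simp only [sub_eq_add_neg] at hx
      simp [u1, dot] at hx
      linear_combination -hx
    subst hα
    have key2 : g (β₁ • u1) = β₂ • u1 := by
      rw [key]; abel
    refine ⟨rfl, ?_⟩
    by_cases hb : β₁ = 0
    · left
      refine ⟨hb, ?_⟩
      rw [hb, zero_smul, map_zero] at key2
      have := congrArg (fun z => z.u 0) key2
      simpa [u1] using this.symm
    · right
      refine ⟨hb, fun hb2 => hb ?_⟩
      rw [hb2, zero_smul] at key2
      have h0 : (β₁ • u1 : SplitOctonion F) = 0 :=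
        g.injective (by rw [key2, map_zero])
      have := congrArg (fun z => z.u 0) h0
      simpa [u1] using this
  · rintro ⟨rfl, hb | hb⟩
    · obtain ⟨h1, h2⟩ := hb
      subst h1; subst h2
      exact ⟨LinearEquiv.refl F _, ⟨rfl, fun x y => rfl⟩, rfl⟩
    · obtain ⟨h1, h2⟩ := hb
      refine ⟨scaleAut (β₂ / β₁) (div_ne_zero h2 h1),
        scaleAut_isAlgAut _ _, ?_⟩
      ext i <;> try rfl
      all_goals
        simp [scaleAut, u1]
      all_goals
        fin_cases i <;> simp <;> field_simp
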